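/- Let 0 = n₀ < n₁ < ⋯ < n_k be integers and a₀, …, a_k real numbers with a₀ ≠ 0 and a_k ≠ 0. For integers M₁ ≤ M₂, let Q_{[M₁,M₂]} be the restriction of the quadratic form Q(x) = ∑_{n∈ℤ}(∑_{j=0}^k a_j x_{n+n_j})² to sequences supported on [M₁, M₂]. Then inf over all intervals [M₁,M₂] of the least eigenvalue of the symmetric matrix of Q_{[M₁,M₂]} equals min_{|z|=1} |∑_{j=0}^k a_j z^{n_j}|², in the sense that each such eigenvalue is ≥ min_{|z|=1}|p(z)|² and the infimum of these least eigenvalues over growing intervals converges to min_{|z|=1}|p(z)|². -/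

import Mathlib

open Finset Complex

section Aux

lemma parseval_aux (L : ℕ) (hL : 0 < L) (x y : ℕ) (hx : x < L) (hy : y < L) :
    ∑ t ∈ Finset.range L,
      (Complex.exp ((2*Real.pi/L : ℝ)*Complex.I) ^ x *
       (starRingEnd ℂ) (Complex.exp ((2*Real.pi/L : ℝ)*Complex.I)) ^ y) ^ t
      = if x = y then (L : ℂ) else 0 := by
  set θ : ℝ := 2*Real.pi/L with hθ
  have hpow : ∀ m : ℕ, Complex.exp ((θ:ℝ)*Complex.I) ^ m = Complex.exp (((m*θ : ℝ))*Complex.I) := by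
    intro m
    rw [← Complex.exp_nat_mul]
    push_cast
    ring_nf
  have hconj : (starRingEnd ℂ) (Complex.exp ((θ:ℝ)*Complex.I)) = Complex.exp (((-θ : ℝ))*Complex.I) := by
    rw [← Complex.exp_conj]
    congr 1
    simp
  have hζ : Complex.exp ((θ:ℝ)*Complex.I) ^ x * (starRingEnd ℂ) (Complex.exp ((θ:ℝ)*Complex.I)) ^ y
      = Complex.exp ((((x:ℝ) - y)*θ : ℝ)*Complex.I) := by
    rw [hconj, hpow, ← Complex.exp_nat_mul, ← Complex.exp_add]
    congr 1
    push_cast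
    ring
  rw [hζ]
  by_cases hxy : x = y
  · subst hxy
    simp
  · rw [if_neg hxy]
    set ζ : ℂ := Complex.exp ((((x:ℝ) - y)*θ : ℝ)*Complex.I) with hζdef
    have hLne : (L:ℝ) ≠ 0 := by positivity
    have hLCne : (L:ℂ) ≠ 0 := by exact_mod_cast hLne
    have hζL : ζ ^ L = 1 := by
      rw [hζdef, ← Complex.exp_nat_mul]
      have : (L:ℂ) * (((((x:ℝ) - y)*θ : ℝ)) * Complex.I) = (((x:ℤ) - y) : ℤ) * (2*Real.pi*Complex.I) := by
        push_cast
        rw [hθ]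
        push_cast
        field_simp
      rw [this, Complex.exp_int_mul_two_pi_mul_I]
    have hζne : ζ ≠ 1 := by
      intro h
      rw [hζdef, Complex.exp_eq_one_iff] at h
      obtain ⟨m, hm⟩ := h
      have h2 : ((x:ℝ) - y)*θ = m*(2*Real.pi) := by
        have := congrArg Complex.im hm
        simpa using this
      rw [hθ] at h2
      have h3 : ((x:ℝ) - y) = m * L := by
        field_simp at h2
        nlinarith [Real.pi_ne_zero, Real.pi_pos, h2]
      have h4 : ((x:ℤ) - y) = m * L := by exact_mod_cast h3
      rcases lt_trichotomy m 0 with hm0 | hm0 | hm0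
      · nlinarith [h4]
      · subst hm0; simp at h4; omega
      · nlinarith [h4]
    rw [geom_sum_eq hζne, hζL]
    simp

lemma parseval (L : ℕ) (hL : 0 < L) (f : ℕ → ℝ) :
    ∑ t ∈ Finset.range L,
      ‖∑ x ∈ Finset.range L, (f x : ℂ) * Complex.exp ((2*Real.pi/L : ℝ)*Complex.I) ^ (t*x)‖ ^ 2
      = L * ∑ x ∈ Finset.range L, f x ^ 2 := by
  set ω := Complex.exp ((2*Real.pi/L : ℝ)*Complex.I) with hω
  have key : ∀ t : ℕ,
      (‖∑ x ∈ Finset.range L, (f x : ℂ) * ω ^ (t*x)‖ ^ 2 : ℝ)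
        = (∑ x ∈ Finset.range L, ∑ y ∈ Finset.range L,
            ((f x : ℂ) * (f y : ℂ)) * ((ω^x * (starRingEnd ℂ) ω ^ y) ^ t)).re := by
    intro t
    have h0 : ∀ z : ℂ, ‖z‖^2 = (z * (starRingEnd ℂ) z).re := by
      intro z; rw [Complex.mul_conj]; simp [Complex.sq_norm]
    rw [h0]
    congr 1
    rw [map_sum, Finset.sum_mul_sum]
    refine Finset.sum_congr rfl fun x _ => Finset.sum_congr rfl fun y _ => ?_
    rw [map_mul, map_pow, Complex.conj_ofReal,
        show ω ^ (t*x) = (ω^x)^t by rw [← pow_mul, Nat.mul_comm],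
        show ((starRingEnd ℂ) ω) ^ (t*y) = (((starRingEnd ℂ) ω)^y)^t by
          rw [← pow_mul, Nat.mul_comm],
        mul_pow]
    ring
  calc ∑ t ∈ Finset.range L, ‖∑ x ∈ Finset.range L, (f x : ℂ) * ω ^ (t*x)‖ ^ 2
      = (∑ t ∈ Finset.range L, ∑ x ∈ Finset.range L, ∑ y ∈ Finset.range L,
            ((f x : ℂ) * (f y : ℂ)) * ((ω^x * (starRingEnd ℂ) ω ^ y) ^ t)).re := by
        rw [Complex.re_sum]
        exact Finset.sum_congr rfl fun t _ => key t
    _ = (∑ x ∈ Finset.range L, ∑ y ∈ Finset.range L,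
            ((f x : ℂ) * (f y : ℂ)) * ∑ t ∈ Finset.range L, ((ω^x * (starRingEnd ℂ) ω ^ y) ^ t)).re := by
        rw [Finset.sum_comm]
        congr 1
        refine Finset.sum_congr rfl fun x _ => ?_
        rw [Finset.sum_comm]
        exact Finset.sum_congr rfl fun y _ => (Finset.mul_sum _ _ _).symm
    _ = (∑ x ∈ Finset.range L, ((f x : ℂ) * (f x : ℂ)) * L).re := by
        congr 1
        refine Finset.sum_congr rfl fun x hx => ?_
        rw [show (∑ y ∈ Finset.range L, ((f x : ℂ) * (f y : ℂ)) * ∑ t ∈ Finset.range L, ((ω^x * (starRingEnd ℂ) ω ^ y) ^ t))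
            = ∑ y ∈ Finset.range L, if x = y then ((f x : ℂ) * (f y : ℂ)) * L else 0 from
          Finset.sum_congr rfl fun y hy => by
            rw [parseval_aux L hL x y (Finset.mem_range.mp hx) (Finset.mem_range.mp hy)]
            split_ifs <;> simp]
        simp [Finset.sum_ite_eq, hx]
    _ = L * ∑ x ∈ Finset.range L, f x ^ 2 := by
        push_cast
        rw [Complex.re_sum]
        rw [Finset.mul_sum]
        refine Finset.sum_congr rfl fun x _ => ?_
        simp
        ring

/-- extension by zero of a vector on `Fin N` to `ℤ` -/
noncomputable def zext (N : ℕ) (v : Fin N → ℝ) : ℤ → ℝ :=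
  fun x => if h : 0 ≤ x ∧ x < N then v ⟨x.toNat, by omega⟩ else 0

lemma zext_coe {N : ℕ} (v : Fin N → ℝ) (r : Fin N) : zext N v r = v r := by
  have hr := r.isLt
  rw [zext, dif_pos (by constructor <;> omega)]
  congr 1
  all_goals first | (exact Fin.ext (by simp)) | rfl | simp

lemma zext_eq_zero {N : ℕ} (v : Fin N → ℝ) {x : ℤ} (hx : x < 0 ∨ (N:ℤ) ≤ x) :
    zext N v x = 0 := by
  rw [zext, dif_neg (by omega)]

/-- sum over a shifted window equals sum over `Fin N` for functions supported on `[0,N)` -/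
lemma shift_sum {M : Type*} [AddCommMonoid M] (N K : ℕ) (c : ℤ) (hc1 : -(K:ℤ) ≤ c) (hc2 : c ≤ 0)
    (F : ℤ → M) (hF : ∀ x : ℤ, x < 0 ∨ (N:ℤ) ≤ x → F x = 0) :
    ∑ m ∈ Finset.range (N + K), F (↑m + c) = ∑ r : Fin N, F ↑r := by
  have e1 : ∑ m ∈ Finset.range (N + K), F (↑m + c)
      = ∑ x ∈ (Finset.range (N + K)).map ⟨fun m : ℕ => (m:ℤ) + c, fun a b h => by have : (a:ℤ) + c = (b:ℤ) + c := h; omega⟩, F x :=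
    by rw [Finset.sum_map]; rfl
  have e2 : ∑ r : Fin N, F ↑r
      = ∑ x ∈ (Finset.range N).map ⟨fun m : ℕ => (m:ℤ), fun a b h => by have : (a:ℤ) = (b:ℤ) := h; omega⟩, F x := by
    rw [Finset.sum_map]
    exact Fin.sum_univ_eq_sum_range (fun m => F ↑m) N
  rw [e1, e2]
  refine (Finset.sum_subset ?_ ?_).symm
  · intro x hx
    simp only [Finset.mem_map, Finset.mem_range, Function.Embedding.coeFn_mk] at hx ⊢
    obtain ⟨m, hm, rfl⟩ := hx
    exact ⟨(↑m - c).toNat, by omega, by show ((((↑m - c).toNat : ℕ) : ℤ) + c) = (m:ℤ); omega⟩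
  · intro x hx hnx
    simp only [Finset.mem_map, Finset.mem_range, Function.Embedding.coeFn_mk] at hx hnx
    apply hF
    by_contra hcon
    push_neg at hcon
    exact hnx ⟨x.toNat, by omega, by show ((x.toNat : ℕ) : ℤ) = x; omega⟩

/-- evaluating a "delta" sum over `Fin N` -/
lemma sum_fin_single {M : Type*} [AddCommMonoid M] {N : ℕ} (y : ℤ) (x : ℤ → M) :
    ∑ s : Fin N, (if (s : ℤ) = y then x s else 0)
      = if 0 ≤ y ∧ y < N then x y else 0 := by
  by_cases h : 0 ≤ y ∧ y < (N:ℤ)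
  · rw [if_pos h]
    rw [Finset.sum_eq_single (⟨y.toNat, by omega⟩ : Fin N)]
    · rw [if_pos (by simp; omega)]
      congr 1
      simp; omega
    · intro b _ hb
      rw [if_neg]
      intro hby
      exact hb (Fin.ext (by simp only [Fin.val_mk]; omega))
    · intro h; exact absurd (Finset.mem_univ _) h
  · rw [if_neg h]
    apply Finset.sum_eq_zero
    intro s _
    have := s.isLt
    rw [if_neg]
    intro hs
    exact h (by constructor <;> omega)

lemma zext_eq_sum {N : ℕ} (v : Fin N → ℝ) (y : ℤ) :
    zext N v y = ∑ s : Fin N, (if (s : ℤ) = y then v s else 0) := by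
  have h2 : (∑ s : Fin N, if (s:ℤ) = y then v s else 0)
      = if 0 ≤ y ∧ y < (N:ℤ) then zext N v y else 0 := by
    rw [← sum_fin_single y (zext N v)]
    exact Finset.sum_congr rfl fun s _ => by rw [zext_coe]
  by_cases h : 0 ≤ y ∧ y < (N:ℤ)
  · rw [h2, if_pos h]
  · rw [h2, if_neg h, zext_eq_zero v (by omega)]

lemma sum4_comm {M : Type*} [AddCommMonoid M] {α β γ δ : Type*} [Fintype α] [Fintype β] [Fintype γ] [Fintype δ]
    (f : α → β → γ → δ → M) :
    ∑ r : α, ∑ s : β, ∑ i : γ, ∑ j : δ, f r s i j = ∑ i : γ, ∑ j : δ, ∑ r : α, ∑ s : β, f r s i j :=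
  calc ∑ r : α, ∑ s : β, ∑ i : γ, ∑ j : δ, f r s i j
      = ∑ r : α, ∑ i : γ, ∑ s : β, ∑ j : δ, f r s i j :=
        Finset.sum_congr rfl fun r _ => Finset.sum_comm
    _ = ∑ i : γ, ∑ r : α, ∑ s : β, ∑ j : δ, f r s i j := Finset.sum_comm
    _ = ∑ i : γ, ∑ r : α, ∑ j : δ, ∑ s : β, f r s i j :=
        Finset.sum_congr rfl fun i _ => Finset.sum_congr rfl fun r _ => Finset.sum_comm
    _ = ∑ i : γ, ∑ j : δ, ∑ r : α, ∑ s : β, f r s i j :=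
        Finset.sum_congr rfl fun i _ => Finset.sum_comm

lemma quad_ge (k : ℕ) (n : Fin (k+1) → ℤ) (a : Fin (k+1) → ℝ) (hn0 : n 0 = 0)
    (hmono : StrictMono n) (C₁ : ℝ)
    (hC₁ : ∀ z : ℂ, ‖z‖ = 1 → C₁ ≤ ‖∑ j : Fin (k+1), (a j : ℂ) * z ^ (n j)‖ ^ 2)
    (N : ℕ) (hN : 0 < N) (v : Fin N → ℝ) :
    C₁ * ∑ r : Fin N, v r ^ 2
      ≤ ∑ i : Fin (k+1), ∑ j : Fin (k+1), a i * a j *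
          (∑ r : Fin N, ∑ s : Fin N, if n i - n j = (r:ℤ) - (s:ℤ) then v r * v s else 0) := by
  set K : ℕ := (n (Fin.last k)).toNat with hK
  have hKcast : (K:ℤ) = n (Fin.last k) := by
    rw [hK]
    exact Int.toNat_of_nonneg (by rw [← hn0]; exact hmono.monotone (Fin.zero_le _))
  have hnj : ∀ j, 0 ≤ n j ∧ n j ≤ (K:ℤ) := by
    intro j
    have h1 : n 0 ≤ n j := hmono.monotone (Fin.zero_le j)
    have h2 : n j ≤ n (Fin.last k) := hmono.monotone (Fin.le_last j)
    omega
  set L : ℕ := N + K with hLdef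
  have hL : 0 < L := by omega
  set ω := Complex.exp ((2*Real.pi/L : ℝ)*Complex.I) with hω
  have hωne : ω ≠ 0 := Complex.exp_ne_zero _
  have hωnorm : ‖ω‖ = 1 := by
    rw [hω]
    exact Complex.norm_exp_ofReal_mul_I _
  -- Step A : the quadratic form equals a sum of squares
  have stepA : ∑ m ∈ Finset.range L, (∑ j, a j * zext N v ((m:ℤ) - K + n j)) ^ 2
      = ∑ i : Fin (k+1), ∑ j : Fin (k+1), a i * a j *
          (∑ r : Fin N, ∑ s : Fin N, if n i - n j = (r:ℤ) - (s:ℤ) then v r * v s else 0) := by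
    have e1 : ∀ m ∈ Finset.range L, (∑ j, a j * zext N v ((m:ℤ) - K + n j)) ^ 2
        = ∑ i, ∑ j, (a i * zext N v ((m:ℤ) + (n i - K))) * (a j * zext N v ((m:ℤ) + (n j - K))) := by
      intro m _
      rw [sq, Finset.sum_mul_sum]
      refine Finset.sum_congr rfl fun i _ => Finset.sum_congr rfl fun j _ => ?_
      rw [show ((m:ℤ) - K + n i) = ((m:ℤ) + (n i - K)) from by ring,
          show ((m:ℤ) - K + n j) = ((m:ℤ) + (n j - K)) from by ring]
    rw [Finset.sum_congr rfl e1]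
    rw [Finset.sum_comm]
    refine Finset.sum_congr rfl fun i _ => ?_
    rw [Finset.sum_comm]
    refine Finset.sum_congr rfl fun j _ => ?_
    have e2 : ∑ m ∈ Finset.range L, (a i * zext N v ((m:ℤ) + (n i - K))) * (a j * zext N v ((m:ℤ) + (n j - K)))
        = a i * a j * ∑ m ∈ Finset.range L, zext N v ((m:ℤ) + (n i - K)) * zext N v (((m:ℤ) + (n i - K)) + (n j - n i)) := by
      rw [Finset.mul_sum]
      refine Finset.sum_congr rfl fun m _ => ?_
      rw [show ((m:ℤ) + (n i - K)) + (n j - n i) = ((m:ℤ) + (n j - K)) from by ring]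
      ring
    rw [e2]
    have e3 : ∑ m ∈ Finset.range (N + K), zext N v ((m:ℤ) + (n i - K)) * zext N v (((m:ℤ) + (n i - ↑K)) + (n j - n i))
        = ∑ r : Fin N, zext N v ↑r * zext N v ((↑r:ℤ) + (n j - n i)) :=
      shift_sum (M := ℝ) N K (n i - K) (by have := hnj i; omega) (by have := hnj i; omega)
        (fun x => zext N v x * zext N v (x + (n j - n i)))
        (fun x hx => by rw [zext_eq_zero v hx, zero_mul])
    rw [e3]
    congr 1
    refine Finset.sum_congr rfl fun r _ => ?_
    rw [zext_coe, zext_eq_sum v ((r:ℤ) + (n j - n i)), Finset.mul_sum]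
    refine Finset.sum_congr rfl fun s _ => ?_
    rw [mul_ite, mul_zero]
    refine if_congr ?_ rfl rfl
    constructor <;> intro h <;> omega
  -- Step B : Fourier lower bound
  have hP1 : ∑ t ∈ Finset.range L,
      ‖∑ m ∈ Finset.range L, ((∑ j, a j * zext N v ((m:ℤ) - K + n j) : ℝ) : ℂ) * ω ^ (t*m)‖ ^ 2
      = L * ∑ m ∈ Finset.range L, (∑ j, a j * zext N v ((m:ℤ) - K + n j)) ^ 2 :=
    parseval L hL (fun m => ∑ j, a j * zext N v ((m:ℤ) - K + n j))
  have hP2 : ∑ t ∈ Finset.range L,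
      ‖∑ x ∈ Finset.range L, ((zext N v (x:ℤ) : ℝ) : ℂ) * ω ^ (t*x)‖ ^ 2
      = L * ∑ x ∈ Finset.range L, (zext N v (x:ℤ)) ^ 2 :=
    parseval L hL (fun x => zext N v (x:ℤ))
  have hvsum : ∑ x ∈ Finset.range L, (zext N v (x:ℤ)) ^ 2 = ∑ r : Fin N, v r ^ 2 := by
    have h0 : ∑ m ∈ Finset.range (N + K), (zext N v ((m:ℤ) + 0)) ^ 2
        = ∑ r : Fin N, (zext N v (r:ℤ)) ^ 2 :=
      shift_sum (M := ℝ) N K 0 (by omega) (le_refl 0) (fun x => (zext N v x)^2)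
        (fun x hx => by rw [zext_eq_zero v hx]; ring)
    rw [show ∑ x ∈ Finset.range L, (zext N v (x:ℤ))^2
        = ∑ m ∈ Finset.range (N+K), (zext N v ((m:ℤ)+0))^2 from
      Finset.sum_congr rfl fun m _ => by rw [add_zero], h0]
    exact Finset.sum_congr rfl fun r _ => by rw [zext_coe]
  have hfac : ∀ t : ℕ,
      ‖∑ m ∈ Finset.range L, ((∑ j, a j * zext N v ((m:ℤ) - K + n j) : ℝ) : ℂ) * ω ^ (t*m)‖ ^ 2
        = ‖∑ j : Fin (k+1), (a j : ℂ) * ((ω^t)⁻¹) ^ (n j)‖^2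
          * ‖∑ x ∈ Finset.range L, ((zext N v (x:ℤ) : ℝ) : ℂ) * ω ^ (t*x)‖ ^ 2 := by
    intro t
    set u := ω ^ t with hu
    have hune : u ≠ 0 := pow_ne_zero _ hωne
    have hunorm : ‖u‖ = 1 := by rw [hu, norm_pow, hωnorm, one_pow]
    set W : ℂ := ∑ r : Fin N, ((v r : ℝ):ℂ) * u ^ ((r:ℤ)) with hW
    have hzextW : (∑ r : Fin N, ((zext N v (r:ℤ) : ℝ):ℂ) * u ^ ((r:ℤ))) = W :=
      Finset.sum_congr rfl fun r _ => by rw [zext_coe]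
    have hVW : ∑ x ∈ Finset.range L, ((zext N v (x:ℤ) : ℝ) : ℂ) * ω ^ (t*x) = W := by
      have h0 : ∑ m ∈ Finset.range (N + K), ((zext N v ((m:ℤ)+0) :ℝ):ℂ) * u ^ (((m:ℤ)+0))
          = ∑ r : Fin N, ((zext N v (r:ℤ) :ℝ):ℂ) * u ^ ((r:ℤ)) :=
        shift_sum (M := ℂ) N K 0 (by omega) (le_refl 0)
          (fun x => ((zext N v x:ℝ):ℂ) * u ^ x)
          (fun x hx => by rw [zext_eq_zero v hx]; simp)
      calc ∑ x ∈ Finset.range L, ((zext N v (x:ℤ) : ℝ) : ℂ) * ω ^ (t*x)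
          = ∑ m ∈ Finset.range (N + K), ((zext N v ((m:ℤ)+0) :ℝ):ℂ) * u ^ (((m:ℤ)+0)) := by
            refine Finset.sum_congr rfl fun m _ => ?_
            rw [add_zero, zpow_natCast, hu, ← pow_mul]
        _ = W := by rw [h0, hzextW]
    have hG : ∑ m ∈ Finset.range L, ((∑ j, a j * zext N v ((m:ℤ) - K + n j) : ℝ) : ℂ) * ω ^ (t*m)
        = (∑ j : Fin (k+1), (a j : ℂ) * (u ^ (K:ℤ) * (u⁻¹) ^ (n j))) * W := by
      have h1 : ∀ m ∈ Finset.range L, ((∑ j, a j * zext N v ((m:ℤ) - K + n j) : ℝ) : ℂ) * ω ^ (t*m)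
          = ∑ j : Fin (k+1), (a j : ℂ) * (((zext N v ((m:ℤ) + (n j - K)) : ℝ):ℂ) * u ^ (m:ℕ)) := by
        intro m _
        push_cast
        rw [Finset.sum_mul]
        refine Finset.sum_congr rfl fun j _ => ?_
        rw [show ((m:ℤ) - K + n j) = ((m:ℤ) + (n j - K)) from by ring, hu, ← pow_mul]
        ring
      rw [Finset.sum_congr rfl h1, Finset.sum_comm, Finset.sum_mul]
      refine Finset.sum_congr rfl fun j _ => ?_
      rw [← Finset.mul_sum]
      have h3 : ∀ m ∈ Finset.range L, ((zext N v ((m:ℤ) + (n j - K)) : ℝ):ℂ) * u ^ (m:ℕ)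
          = (((zext N v ((m:ℤ) + (n j - K)) : ℝ):ℂ) * u ^ ((m:ℤ) + (n j - K))) * u ^ (-(n j - (K:ℤ))) := by
        intro m _
        rw [mul_assoc, ← zpow_add₀ hune,
          show ((m:ℤ) + (n j - K)) + (-(n j - (K:ℤ))) = ((m:ℕ):ℤ) from by ring, zpow_natCast]
      rw [Finset.sum_congr rfl h3, ← Finset.sum_mul]
      have h4 : ∑ m ∈ Finset.range (N+K), ((zext N v ((m:ℤ) + (n j - K)) : ℝ):ℂ) * u ^ ((m:ℤ) + (n j - K))
          = ∑ r : Fin N, ((zext N v (r:ℤ) : ℝ):ℂ) * u ^ ((r:ℤ)) :=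
        shift_sum (M := ℂ) N K (n j - K) (by have := hnj j; omega) (by have := hnj j; omega)
          (fun x => ((zext N v x:ℝ):ℂ) * u ^ x)
          (fun x hx => by rw [zext_eq_zero v hx]; simp)
      rw [h4, hzextW,
        show -(n j - (K:ℤ)) = (K:ℤ) + (-(n j)) from by ring, zpow_add₀ hune, zpow_neg, ← inv_zpow]
      ring
    rw [hG, hVW, norm_mul, mul_pow]
    congr 2
    have hsplit : (∑ j : Fin (k+1), (a j : ℂ) * (u ^ (K:ℤ) * (u⁻¹) ^ (n j)))
        = u ^ (K:ℤ) * ∑ j : Fin (k+1), (a j : ℂ) * (u⁻¹) ^ (n j) := by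
      rw [Finset.mul_sum]
      exact Finset.sum_congr rfl fun j _ => by ring
    rw [hsplit, norm_mul, norm_zpow, hunorm, one_zpow, one_mul]
  -- assembly
  have hLR : (0:ℝ) < L := by exact_mod_cast hL
  have main : (L:ℝ) * (C₁ * ∑ r : Fin N, v r ^ 2)
      ≤ (L:ℝ) * ∑ m ∈ Finset.range L, (∑ j, a j * zext N v ((m:ℤ) - K + n j)) ^ 2 := by
    calc (L:ℝ) * (C₁ * ∑ r : Fin N, v r ^ 2)
        = C₁ * ((L:ℝ) * ∑ x ∈ Finset.range L, (zext N v (x:ℤ))^2) := by rw [hvsum]; ring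
      _ = C₁ * ∑ t ∈ Finset.range L,
            ‖∑ x ∈ Finset.range L, ((zext N v (x:ℤ) : ℝ) : ℂ) * ω ^ (t*x)‖ ^ 2 := by rw [hP2]
      _ = ∑ t ∈ Finset.range L, C₁ *
            ‖∑ x ∈ Finset.range L, ((zext N v (x:ℤ) : ℝ) : ℂ) * ω ^ (t*x)‖ ^ 2 :=
          Finset.mul_sum _ _ _
      _ ≤ ∑ t ∈ Finset.range L,
            ‖∑ m ∈ Finset.range L, ((∑ j, a j * zext N v ((m:ℤ) - K + n j) : ℝ) : ℂ) * ω ^ (t*m)‖ ^ 2 := by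
          refine Finset.sum_le_sum fun t _ => ?_
          rw [hfac t]
          refine mul_le_mul_of_nonneg_right ?_ (by positivity)
          refine hC₁ _ ?_
          rw [norm_inv, norm_pow, hωnorm, one_pow, inv_one]
      _ = (L:ℝ) * ∑ m ∈ Finset.range L, (∑ j, a j * zext N v ((m:ℤ) - K + n j)) ^ 2 := hP1
  have := le_of_mul_le_mul_left main hLR
  rw [stepA] at this
  exact this

lemma exists_eigen_le {N : ℕ} (B : Matrix (Fin N) (Fin N) ℝ) (hB : B.IsHermitian)
    (t : ℝ) (w : Fin N → ℝ) (hw : w ≠ 0)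
    (hq : ∑ x : Fin N, w x * B.mulVec w x ≤ t * ∑ x : Fin N, w x ^ 2) :
    ∃ (lam : ℝ) (v : Fin N → ℝ), v ≠ 0 ∧ B.mulVec v = lam • v ∧ lam ≤ t := by
  classical
  set b := hB.eigenvectorBasis with hb
  set lam := hB.eigenvalues with hlam
  set W : EuclideanSpace ℝ (Fin N) := (WithLp.equiv 2 _).symm w with hWdef
  set rep : Fin N → ℝ := fun i => b.repr W i with hrep
  have hsum : ∑ i, rep i • (b i : EuclideanSpace ℝ (Fin N)) = W := b.sum_repr W
  -- as plain functions
  have hsumfun : ∀ x : Fin N, ∑ i, rep i * (b i x) = w x := by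
    intro x
    have h1 : (∑ i, rep i • (b i : EuclideanSpace ℝ (Fin N))) x = W x := by rw [hsum]
    rw [show (∑ i, rep i • (b i : EuclideanSpace ℝ (Fin N))) x = ∑ i, rep i * (b i x) from by
      simp [EuclideanSpace, PiLp, WithLp]] at h1
    exact h1
  have hmv : ∀ i, B.mulVec (b i) = lam i • (b i : Fin N → ℝ) := fun i =>
    hB.mulVec_eigenvectorBasis i
  -- orthonormality as functions
  have hortho : ∀ i i' : Fin N, ∑ x : Fin N, b i x * b i' x = if i = i' then 1 else 0 := by
    intro i i'
    have h := b.orthonormal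
    rw [orthonormal_iff_ite] at h
    have := h i i'
    rw [PiLp.inner_apply] at this
    simpa [RCLike.inner_apply, mul_comm] using this
  have hBdef : ∀ (u : Fin N → ℝ) x, B.mulVec u x = ∑ s, B x s * u s := fun u x => by
    simp [Matrix.mulVec, dotProduct]
  have hmv2 : ∀ x, B.mulVec w x = ∑ i, rep i * (lam i * b i x) := by
    intro x
    rw [hBdef]
    calc ∑ s, B x s * w s = ∑ s, ∑ i, rep i * (B x s * b i s) := by
          refine Finset.sum_congr rfl fun s _ => ?_
          rw [← hsumfun s, Finset.mul_sum]
          exact Finset.sum_congr rfl fun i _ => by ring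
      _ = ∑ i, rep i * (∑ s, B x s * b i s) := by
          rw [Finset.sum_comm]
          exact Finset.sum_congr rfl fun i _ => by rw [Finset.mul_sum]
      _ = ∑ i, rep i * (lam i * b i x) := by
          refine Finset.sum_congr rfl fun i _ => ?_
          have h5 := congrFun (hmv i) x
          rw [hBdef] at h5
          rw [h5]
          simp
  have hquad : ∑ x, w x * B.mulVec w x = ∑ i, lam i * rep i ^ 2 := by
    calc ∑ x, w x * B.mulVec w x
        = ∑ x, ∑ i', ∑ i, (rep i' * b i' x) * (rep i * (lam i * b i x)) := by
          refine Finset.sum_congr rfl fun x _ => ?_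
          rw [hmv2 x, ← hsumfun x, Finset.sum_mul]
          exact Finset.sum_congr rfl fun i' _ => by rw [Finset.mul_sum]
      _ = ∑ i', ∑ i, (rep i' * rep i * lam i) * ∑ x, b i' x * b i x := by
          rw [Finset.sum_comm]
          refine Finset.sum_congr rfl fun i' _ => ?_
          rw [Finset.sum_comm]
          refine Finset.sum_congr rfl fun i _ => ?_
          rw [Finset.mul_sum]
          exact Finset.sum_congr rfl fun x _ => by ring
      _ = ∑ i', rep i' * rep i' * lam i' := by
          refine Finset.sum_congr rfl fun i' _ => ?_
          have h6 : ∀ i : Fin N, (rep i' * rep i * lam i) * ∑ x, b i' x * b i x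
              = if i' = i then rep i' * rep i' * lam i' else 0 := by
            intro i
            rw [hortho i' i]
            split_ifs with h
            · subst h; ring
            · ring
          rw [Finset.sum_congr rfl (fun i _ => h6 i), Finset.sum_ite_eq]
          simp
      _ = ∑ i, lam i * rep i ^ 2 := Finset.sum_congr rfl fun i _ => by ring
  have hnorm : ∑ x, w x ^ 2 = ∑ i, rep i ^ 2 := by
    calc ∑ x, w x ^ 2
        = ∑ x, ∑ i', ∑ i, (rep i' * b i' x) * (rep i * b i x) := by
          refine Finset.sum_congr rfl fun x _ => ?_
          rw [sq, ← hsumfun x, Finset.sum_mul_sum]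
      _ = ∑ i', ∑ i, (rep i' * rep i) * ∑ x, b i' x * b i x := by
          rw [Finset.sum_comm]
          refine Finset.sum_congr rfl fun i' _ => ?_
          rw [Finset.sum_comm]
          refine Finset.sum_congr rfl fun i _ => ?_
          rw [Finset.mul_sum]
          exact Finset.sum_congr rfl fun x _ => by ring
      _ = ∑ i', rep i' * rep i' := by
          refine Finset.sum_congr rfl fun i' _ => ?_
          have h6 : ∀ i : Fin N, (rep i' * rep i) * ∑ x, b i' x * b i x
              = if i' = i then rep i' * rep i' else 0 := by
            intro i
            rw [hortho i' i]
            split_ifs with h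
            · subst h; ring
            · ring
          rw [Finset.sum_congr rfl (fun i _ => h6 i), Finset.sum_ite_eq]
          simp
      _ = ∑ i, rep i ^ 2 := Finset.sum_congr rfl fun i _ => by rw [sq]
  -- pick the minimal eigenvalue among nonzero coefficients
  set s : Finset (Fin N) := Finset.univ.filter (fun i => rep i ≠ 0) with hs
  have hsne : s.Nonempty := by
    by_contra hemp
    rw [Finset.not_nonempty_iff_eq_empty] at hemp
    apply hw
    funext x
    rw [Pi.zero_apply, ← hsumfun x]
    refine Finset.sum_eq_zero fun i _ => ?_
    have : rep i = 0 := by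
      by_contra hne
      have : i ∈ s := by rw [hs]; simp [hne]
      rw [hemp] at this
      exact absurd this (Finset.notMem_empty i)
    rw [this, zero_mul]
  obtain ⟨i₀, hi₀s, hi₀min⟩ := Finset.exists_min_image s lam hsne
  have hfilt : ∀ (f : Fin N → ℝ), (∀ i, rep i = 0 → f i = 0) → ∑ i ∈ s, f i = ∑ i, f i := by
    intro f hf
    refine Finset.sum_subset (Finset.filter_subset _ _) fun i _ hi => ?_
    rw [hs] at hi
    simp only [Finset.mem_filter, Finset.mem_univ, true_and, not_not] at hi
    exact hf i hi
  have hpos : 0 < ∑ i ∈ s, rep i ^ 2 := by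
    refine Finset.sum_pos' (fun i _ => sq_nonneg _) ⟨i₀, hi₀s, ?_⟩
    have : rep i₀ ≠ 0 := by
      rw [hs] at hi₀s
      simpa using hi₀s
    positivity
  have hle : lam i₀ * ∑ i ∈ s, rep i ^ 2 ≤ t * ∑ i ∈ s, rep i ^ 2 := by
    calc lam i₀ * ∑ i ∈ s, rep i ^ 2 = ∑ i ∈ s, lam i₀ * rep i ^ 2 := Finset.mul_sum _ _ _
      _ ≤ ∑ i ∈ s, lam i * rep i ^ 2 :=
          Finset.sum_le_sum fun i hi => mul_le_mul_of_nonneg_right (hi₀min i hi) (sq_nonneg _)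
      _ = ∑ i, lam i * rep i ^ 2 := hfilt _ (fun i h => by rw [h]; ring)
      _ = ∑ x, w x * B.mulVec w x := hquad.symm
      _ ≤ t * ∑ x, w x ^ 2 := hq
      _ = t * ∑ i, rep i ^ 2 := by rw [hnorm]
      _ = t * ∑ i ∈ s, rep i ^ 2 := by rw [hfilt _ (fun i h => by rw [h]; ring)]
  have hlamle : lam i₀ ≤ t := le_of_mul_le_mul_right (by linarith [hle]) hpos
  refine ⟨lam i₀, b i₀, ?_, hmv i₀, hlamle⟩
  intro h0
  have h2 := hortho i₀ i₀
  rw [if_pos rfl] at h2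
  rw [show ∑ x, b i₀ x * b i₀ x = 0 from Finset.sum_eq_zero fun x _ => by
    rw [show b i₀ x = 0 from congrFun h0 x, zero_mul]] at h2
  exact absurd h2 (by norm_num)

lemma reshuffle {k N : ℕ} (n : Fin (k+1) → ℤ) (a : Fin (k+1) → ℝ) (v : Fin N → ℝ) :
    ∑ x : Fin N, v x * (Matrix.of fun r s : Fin N =>
        ∑ i : Fin (k+1), ∑ j : Fin (k+1), if n i - n j = (r:ℤ) - (s:ℤ) then a i * a j else 0).mulVec v x
    = ∑ i : Fin (k+1), ∑ j : Fin (k+1), a i * a j *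
        (∑ r : Fin N, ∑ s : Fin N, if n i - n j = (r:ℤ) - (s:ℤ) then v r * v s else 0) := by
  calc ∑ x : Fin N, v x * (Matrix.of fun r s : Fin N =>
        ∑ i : Fin (k+1), ∑ j : Fin (k+1), if n i - n j = (r:ℤ) - (s:ℤ) then a i * a j else 0).mulVec v x
      = ∑ r : Fin N, ∑ s : Fin N, ∑ i : Fin (k+1), ∑ j : Fin (k+1),
          (if n i - n j = (r:ℤ) - (s:ℤ) then (a i * a j) * (v r * v s) else 0) := by
        refine Finset.sum_congr rfl fun r _ => ?_
        rw [show (Matrix.of fun r s : Fin N =>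
            ∑ i : Fin (k+1), ∑ j : Fin (k+1), if n i - n j = (r:ℤ) - (s:ℤ) then a i * a j else 0).mulVec v r
          = ∑ s : Fin N, (∑ i : Fin (k+1), ∑ j : Fin (k+1),
              if n i - n j = (r:ℤ) - (s:ℤ) then a i * a j else 0) * v s from by
            simp [Matrix.mulVec, dotProduct]]
        rw [Finset.mul_sum]
        refine Finset.sum_congr rfl fun s _ => ?_
        rw [Finset.sum_mul, Finset.mul_sum]
        refine Finset.sum_congr rfl fun i _ => ?_
        rw [Finset.sum_mul, Finset.mul_sum]
        refine Finset.sum_congr rfl fun j _ => ?_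
        split_ifs <;> ring
    _ = ∑ i : Fin (k+1), ∑ j : Fin (k+1), ∑ r : Fin N, ∑ s : Fin N,
          (if n i - n j = (r:ℤ) - (s:ℤ) then (a i * a j) * (v r * v s) else 0) := sum4_comm _
    _ = ∑ i : Fin (k+1), ∑ j : Fin (k+1), a i * a j *
        (∑ r : Fin N, ∑ s : Fin N, if n i - n j = (r:ℤ) - (s:ℤ) then v r * v s else 0) := by
        refine Finset.sum_congr rfl fun i _ => Finset.sum_congr rfl fun j _ => ?_
        rw [Finset.mul_sum]
        refine Finset.sum_congr rfl fun r _ => ?_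
        rw [Finset.mul_sum]
        refine Finset.sum_congr rfl fun s _ => ?_
        split_ifs <;> ring

lemma count_pairs {N : ℕ} (Kb : ℕ) (δ : ℤ) (hδ1 : -(Kb:ℤ) ≤ δ) (hδ2 : δ ≤ Kb) :
    ((Finset.univ.filter (fun r : Fin N => 0 ≤ (r:ℤ) - δ ∧ (r:ℤ) - δ < N)).card ≤ N)
    ∧ (N ≤ (Finset.univ.filter (fun r : Fin N => 0 ≤ (r:ℤ) - δ ∧ (r:ℤ) - δ < N)).card + Kb) := by
  classical
  constructor
  · calc (Finset.univ.filter (fun r : Fin N => 0 ≤ (r:ℤ) - δ ∧ (r:ℤ) - δ < N)).card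
        ≤ (Finset.univ : Finset (Fin N)).card := Finset.card_filter_le _ _
      _ = N := by simp
  · have hcompl : (Finset.univ.filter (fun r : Fin N => 0 ≤ (r:ℤ) - δ ∧ (r:ℤ) - δ < N)).card
        + (Finset.univ.filter (fun r : Fin N => ¬ (0 ≤ (r:ℤ) - δ ∧ (r:ℤ) - δ < N))).card = N := by
      rw [Finset.card_filter_add_card_filter_not]
      simp
    have hneg : (Finset.univ.filter (fun r : Fin N => ¬ (0 ≤ (r:ℤ) - δ ∧ (r:ℤ) - δ < N))).card ≤ Kb := by
      by_cases hd : 0 ≤ δ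
      · refine le_trans (Finset.card_le_card_of_injOn (fun r => (r : ℕ)) ?_ ?_ (t := Finset.range Kb)) (by simp)
        · intro r hr
          rw [Finset.mem_coe, Finset.mem_filter] at hr
          have h2 := hr.2
          have h3 := r.isLt
          simp only [Finset.mem_coe, Finset.mem_range]
          omega
        · intro r _ r' _ h
          exact Fin.ext h
      · refine le_trans (Finset.card_le_card_of_injOn (fun r => (r : ℕ) + Kb - N) ?_ ?_ (t := Finset.range Kb)) (by simp)
        · intro r hr
          rw [Finset.mem_coe, Finset.mem_filter] at hr
          have h2 := hr.2
          have h3 := r.isLt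
          simp only [Finset.mem_coe, Finset.mem_range]
          omega
        · intro r hr r' hr' h
          simp only [Finset.coe_filter, Set.mem_setOf_eq, Finset.mem_univ, true_and] at hr hr'
          have h1 := r.isLt
          have h2 := r'.isLt
          have h' : (r:ℕ) + Kb - N = (r':ℕ) + Kb - N := h
          exact Fin.ext (by omega)
    omega


end Aux

/-- The infimum, over all intervals `[M₁,M₂] ⊂ ℤ`, of the least eigenvalue of the main
diagonal block `(B_{rs}) = (∑_{i,j : n_i−n_j = r−s} a_i a_j)` of the matrix of the quadratic
form `∑_{n∈ℤ}(∑_j a_j x_{n+n_j})²` equals `C₁ = min_{|z|=1}|∑_j a_j z^{n_j}|²`: every such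
eigenvalue is `≥ C₁`, and eigenvalues arbitrarily close to `C₁` occur. -/
theorem stmt_19 (k : ℕ) (n : Fin (k + 1) → ℤ) (a : Fin (k + 1) → ℝ)
    (hn0 : n 0 = 0) (hmono : StrictMono n)
    (ha0 : a 0 ≠ 0) (hak : a (Fin.last k) ≠ 0)
    (C₁ : ℝ)
    (hC₁ : IsLeast {y : ℝ | ∃ z : ℂ, ‖z‖ = 1 ∧
      y = ‖∑ j : Fin (k + 1), (a j : ℂ) * z ^ (n j)‖ ^ 2} C₁) :
    (∀ M₁ M₂ : ℤ, M₁ ≤ M₂ →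
      ∀ (lam : ℝ) (v : Fin ((M₂ - M₁ + 1).toNat) → ℝ), v ≠ 0 →
        (Matrix.of fun r s : Fin ((M₂ - M₁ + 1).toNat) =>
            ∑ i : Fin (k + 1), ∑ j : Fin (k + 1),
              if n i - n j = ((M₁ + (r : ℕ)) - (M₁ + (s : ℕ)) : ℤ) then a i * a j
              else 0).mulVec v = lam • v →
        C₁ ≤ lam) ∧
    (∀ ε : ℝ, 0 < ε →
      ∃ M₁ M₂ : ℤ, M₁ ≤ M₂ ∧
        ∃ (lam : ℝ) (v : Fin ((M₂ - M₁ + 1).toNat) → ℝ), v ≠ 0 ∧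
          (Matrix.of fun r s : Fin ((M₂ - M₁ + 1).toNat) =>
              ∑ i : Fin (k + 1), ∑ j : Fin (k + 1),
                if n i - n j = ((M₁ + (r : ℕ)) - (M₁ + (s : ℕ)) : ℤ) then a i * a j
                else 0).mulVec v = lam • v ∧
          lam < C₁ + ε) := by
  have hC1lb : ∀ z : ℂ, ‖z‖ = 1 → C₁ ≤ ‖∑ j : Fin (k+1), (a j : ℂ) * z ^ (n j)‖ ^ 2 :=
    fun z hz => hC₁.2 ⟨z, hz, rfl⟩
  constructor
  · -- lower bound part
    intro M₁ M₂ hM lam v hv heig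
    simp only [add_sub_add_left_eq_sub] at heig
    have hNpos : 0 < (M₂ - M₁ + 1).toNat := by omega
    have hdot : ∑ x, v x * (Matrix.of fun r s : Fin ((M₂ - M₁ + 1).toNat) =>
        ∑ i : Fin (k + 1), ∑ j : Fin (k + 1),
          if n i - n j = ((r : ℕ) : ℤ) - ((s : ℕ) : ℤ) then a i * a j else 0).mulVec v x
        = lam * ∑ x, v x ^ 2 := by
      rw [heig, Finset.mul_sum]
      exact Finset.sum_congr rfl fun x _ => by simp [Pi.smul_apply, smul_eq_mul]; ring
    rw [reshuffle n a v] at hdot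
    have hQ := quad_ge k n a hn0 hmono C₁ hC1lb _ hNpos v
    rw [hdot] at hQ
    have hvpos : 0 < ∑ x, v x ^ 2 := by
      obtain ⟨x, hx⟩ := Function.ne_iff.mp hv
      exact Finset.sum_pos' (fun i _ => sq_nonneg _) ⟨x, Finset.mem_univ _, by have hx' : v x ≠ 0 := hx; positivity⟩
    exact le_of_mul_le_mul_right hQ hvpos
  · -- approximation part
    intro ε hε
    obtain ⟨z₀, hz₀, hC₁val⟩ := hC₁.1
    have hz₀ne : z₀ ≠ 0 := by intro h; rw [h] at hz₀; simp at hz₀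
    set Ka : ℕ := (n (Fin.last k)).toNat with hKa
    have hKcast : (Ka:ℤ) = n (Fin.last k) :=
      Int.toNat_of_nonneg (by rw [← hn0]; exact hmono.monotone (Fin.zero_le _))
    have hnj : ∀ j, 0 ≤ n j ∧ n j ≤ (Ka:ℤ) := by
      intro j
      have h1 : n 0 ≤ n j := hmono.monotone (Fin.zero_le j)
      have h2 : n j ≤ n (Fin.last k) := hmono.monotone (Fin.le_last j)
      omega
    set K₂ : ℝ := (∑ j, |a j|)^2 * Ka with hK₂
    have hK₂0 : 0 ≤ K₂ := by positivity
    set N : ℕ := Nat.ceil (K₂ / ε) + 1 with hNdef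
    have hNpos : 0 < N := Nat.succ_pos _
    have hNR : (0:ℝ) < N := by exact_mod_cast hNpos
    have hKN : K₂ / N < ε := by
      rw [div_lt_iff₀ hNR]
      have h1 : K₂ / ε < N := by
        calc K₂ / ε ≤ (Nat.ceil (K₂/ε) : ℝ) := Nat.le_ceil _
          _ < N := by rw [hNdef]; exact_mod_cast Nat.lt_succ_self _
      calc K₂ = (K₂/ε) * ε := by field_simp
        _ < N * ε := by exact mul_lt_mul_of_pos_right h1 hε
        _ = ε * N := by ring
    refine ⟨0, (N:ℤ) - 1, by omega, ?_⟩
    rw [show (((N:ℤ) - 1) - 0 + 1).toNat = N from by omega]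
    simp only [zero_add]
    -- canonical matrix
    set B : Matrix (Fin N) (Fin N) ℝ := Matrix.of fun r s : Fin N =>
      ∑ i : Fin (k + 1), ∑ j : Fin (k + 1),
        if n i - n j = ((r : ℕ) : ℤ) - ((s : ℕ) : ℤ) then a i * a j else 0 with hB
    have hBH : B.IsHermitian := by
      rw [Matrix.IsHermitian]
      ext r s
      rw [Matrix.conjTranspose_apply, star_trivial, hB, Matrix.of_apply, Matrix.of_apply,
        Finset.sum_comm]
      refine Finset.sum_congr rfl fun i _ => Finset.sum_congr rfl fun j _ => ?_
      refine if_congr ?_ (mul_comm _ _) rfl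
      constructor <;> intro <;> omega
    set c : Fin N → ℝ := fun r => (z₀ ^ (r:ℕ)).re with hc
    set d : Fin N → ℝ := fun r => (z₀ ^ (r:ℕ)).im with hd
    have hnormsq1 : ∀ r : Fin N, c r ^ 2 + d r ^ 2 = 1 := by
      intro r
      have h1 : ‖z₀ ^ (r:ℕ)‖ = 1 := by rw [norm_pow, hz₀, one_pow]
      have h2 : Complex.normSq (z₀ ^ (r:ℕ)) = 1 := by
        rw [← Complex.sq_norm, h1, one_pow]
      rw [hc, hd]
      simp only
      rw [Complex.normSq_apply] at h2
      nlinarith [h2]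
    have hsumsq : (∑ r, c r ^ 2) + (∑ r, d r ^ 2) = (N:ℝ) := by
      rw [← Finset.sum_add_distrib]
      rw [Finset.sum_congr rfl fun r _ => hnormsq1 r]
      simp
    have hzinv : (starRingEnd ℂ) z₀ = z₀⁻¹ := by
      have h2 : Complex.normSq z₀ = 1 := by
        rw [← Complex.sq_norm, hz₀, one_pow]
      rw [Complex.inv_def, h2]
      simp
    have key : ∀ u w : ℤ, (starRingEnd ℂ) (z₀ ^ u) * z₀ ^ w = z₀ ^ (w - u) := by
      intro u w
      rw [map_zpow₀, hzinv, inv_zpow, ← zpow_neg, ← zpow_add₀ hz₀ne]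
      congr 1
      ring
    set cnt : Fin (k+1) → Fin (k+1) → ℕ := fun i j =>
      (Finset.univ.filter (fun r : Fin N =>
        0 ≤ (r:ℤ) - (n i - n j) ∧ (r:ℤ) - (n i - n j) < N)).card with hcnt
    -- combined quadratic form computation
    have hG : ∀ i j : Fin (k+1),
        (∑ r : Fin N, ∑ s : Fin N, if n i - n j = ((r:ℕ):ℤ) - ((s:ℕ):ℤ) then c r * c s else 0)
        + (∑ r : Fin N, ∑ s : Fin N, if n i - n j = ((r:ℕ):ℤ) - ((s:ℕ):ℤ) then d r * d s else 0)
        = (cnt i j : ℝ) * (z₀ ^ (n j - n i)).re := by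
      intro i j
      calc (∑ r : Fin N, ∑ s : Fin N, if n i - n j = ((r:ℕ):ℤ) - ((s:ℕ):ℤ) then c r * c s else 0)
          + (∑ r : Fin N, ∑ s : Fin N, if n i - n j = ((r:ℕ):ℤ) - ((s:ℕ):ℤ) then d r * d s else 0)
          = ∑ r : Fin N, ∑ s : Fin N,
              (if n i - n j = ((r:ℕ):ℤ) - ((s:ℕ):ℤ) then (z₀ ^ (n j - n i)).re else 0) := by
            rw [← Finset.sum_add_distrib]
            refine Finset.sum_congr rfl fun r _ => ?_
            rw [← Finset.sum_add_distrib]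
            refine Finset.sum_congr rfl fun s _ => ?_
            split_ifs with hcond
            · have h2 : ((starRingEnd ℂ) (z₀ ^ ((r:ℕ):ℤ)) * z₀ ^ ((s:ℕ):ℤ)).re
                  = c r * c s + d r * d s := by
                rw [zpow_natCast, zpow_natCast, Complex.mul_re]
                simp only [Complex.conj_re, Complex.conj_im, hc, hd]
                ring
              rw [← h2, key ((r:ℕ):ℤ) ((s:ℕ):ℤ),
                show ((s:ℕ):ℤ) - ((r:ℕ):ℤ) = n j - n i from by omega]
            · ring
        _ = ∑ r : Fin N,
              (if 0 ≤ (r:ℤ) - (n i - n j) ∧ (r:ℤ) - (n i - n j) < N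
               then (z₀ ^ (n j - n i)).re else 0) := by
            refine Finset.sum_congr rfl fun r _ => ?_
            rw [← sum_fin_single (M := ℝ) ((r:ℤ) - (n i - n j)) (fun _ => (z₀ ^ (n j - n i)).re)]
            refine Finset.sum_congr rfl fun s _ => ?_
            refine if_congr ?_ rfl rfl
            constructor <;> intro <;> omega
        _ = (cnt i j : ℝ) * (z₀ ^ (n j - n i)).re := by
            rw [← Finset.sum_filter, Finset.sum_const, nsmul_eq_mul, hcnt]
    have hre_ofReal_mul : ∀ (x : ℝ) (w : ℂ), (((x:ℝ):ℂ) * w).re = x * w.re := by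
      intro x w
      simp [Complex.mul_re]
    have hC₁expand : C₁ = ∑ i : Fin (k+1), ∑ j : Fin (k+1),
        (a i * a j) * (z₀ ^ (n j - n i)).re := by
      have hnorm2 : ∀ z : ℂ, ‖z‖^2 = ((starRingEnd ℂ) z * z).re := by
        intro z
        rw [mul_comm, Complex.mul_conj]
        simp [Complex.sq_norm]
      rw [hC₁val, hnorm2, map_sum, Finset.sum_mul_sum, Complex.re_sum]
      refine Finset.sum_congr rfl fun i _ => ?_
      rw [Complex.re_sum]
      refine Finset.sum_congr rfl fun j _ => ?_
      have h3 : (starRingEnd ℂ) ((a i:ℂ) * z₀ ^ (n i)) * ((a j:ℂ) * z₀ ^ (n j))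
          = ((a i * a j : ℝ):ℂ) * z₀ ^ (n j - n i) := by
        rw [map_mul, Complex.conj_ofReal, ← key (n i) (n j)]
        push_cast
        ring
      rw [h3, hre_ofReal_mul]
    -- the trace inequality
    have hcntabs : ∀ i j : Fin (k+1), |(cnt i j : ℝ) - N| ≤ (Ka : ℝ) := by
      intro i j
      have hδ1 : -(Ka:ℤ) ≤ n i - n j := by have := hnj i; have := hnj j; omega
      have hδ2 : n i - n j ≤ (Ka:ℤ) := by have := hnj i; have := hnj j; omega
      obtain ⟨hc1, hc2⟩ := count_pairs (N := N) Ka (n i - n j) hδ1 hδ2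
      have hc1' : (cnt i j : ℝ) ≤ N := by exact_mod_cast hc1
      have hc2' : (N:ℝ) ≤ (cnt i j : ℝ) + Ka := by exact_mod_cast hc2
      rw [abs_le]
      constructor <;> linarith
    have hreabs : ∀ i j : Fin (k+1), |(z₀ ^ (n j - n i)).re| ≤ 1 := by
      intro i j
      calc |(z₀ ^ (n j - n i)).re| ≤ ‖z₀ ^ (n j - n i)‖ := Complex.abs_re_le_norm _
        _ = ‖z₀‖ ^ (n j - n i) := by rw [norm_zpow]
        _ = 1 := by rw [hz₀, one_zpow]
    have hK2sum : K₂ = ∑ i : Fin (k+1), ∑ j : Fin (k+1), |a i| * |a j| * Ka := by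
      rw [hK₂, sq, Finset.sum_mul_sum, Finset.sum_mul]
      refine Finset.sum_congr rfl fun i _ => ?_
      rw [Finset.sum_mul]
    have hbound : (∑ x, c x * B.mulVec c x) + (∑ x, d x * B.mulVec d x)
        ≤ (N:ℝ) * C₁ + K₂ := by
      have hQcd : (∑ x, c x * B.mulVec c x) + (∑ x, d x * B.mulVec d x)
          = ∑ i : Fin (k+1), ∑ j : Fin (k+1), (a i * a j) * ((cnt i j : ℝ) * (z₀ ^ (n j - n i)).re) := by
        rw [hB, reshuffle n a c, reshuffle n a d, ← Finset.sum_add_distrib]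
        refine Finset.sum_congr rfl fun i _ => ?_
        rw [← Finset.sum_add_distrib]
        refine Finset.sum_congr rfl fun j _ => ?_
        rw [← mul_add, hG i j]
      have hNC : (N:ℝ) * C₁ = ∑ i : Fin (k+1), ∑ j : Fin (k+1),
          (a i * a j) * ((N:ℝ) * (z₀ ^ (n j - n i)).re) := by
        rw [hC₁expand, Finset.mul_sum]
        refine Finset.sum_congr rfl fun i _ => ?_
        rw [Finset.mul_sum]
        refine Finset.sum_congr rfl fun j _ => by ring
      have hdiff : (∑ x, c x * B.mulVec c x) + (∑ x, d x * B.mulVec d x) - (N:ℝ) * C₁ ≤ K₂ := by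
        rw [hQcd, hNC, ← Finset.sum_sub_distrib, hK2sum]
        refine Finset.sum_le_sum fun i _ => ?_
        rw [← Finset.sum_sub_distrib]
        refine Finset.sum_le_sum fun j _ => ?_
        calc (a i * a j) * ((cnt i j : ℝ) * (z₀ ^ (n j - n i)).re)
              - (a i * a j) * ((N:ℝ) * (z₀ ^ (n j - n i)).re)
            = (a i * a j) * (((cnt i j : ℝ) - N) * (z₀ ^ (n j - n i)).re) := by ring
          _ ≤ |(a i * a j) * (((cnt i j : ℝ) - N) * (z₀ ^ (n j - n i)).re)| := le_abs_self _
          _ = |a i| * |a j| * (|(cnt i j : ℝ) - N| * |(z₀ ^ (n j - n i)).re|) := by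
              rw [abs_mul, abs_mul, abs_mul]
          _ ≤ |a i| * |a j| * ((Ka:ℝ) * 1) := by
              refine mul_le_mul_of_nonneg_left ?_ (by positivity)
              exact mul_le_mul (hcntabs i j) (hreabs i j) (abs_nonneg _) (by positivity)
          _ = |a i| * |a j| * Ka := by ring
      linarith
    set t : ℝ := C₁ + K₂ / N with ht
    have htN : t * ((∑ r, c r ^ 2) + (∑ r, d r ^ 2)) = (N:ℝ) * C₁ + K₂ := by
      rw [hsumsq, ht]
      field_simp
    have hcd : (∑ x, c x * B.mulVec c x) + (∑ x, d x * B.mulVec d x)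
        ≤ t * ((∑ r, c r ^ 2) + (∑ r, d r ^ 2)) := by rw [htN]; exact hbound
    have hc0 : c ≠ 0 := by
      intro h0
      have h1 := congrFun h0 ⟨0, hNpos⟩
      rw [hc] at h1
      simp at h1
    have hex : ∃ (lam : ℝ) (v : Fin N → ℝ), v ≠ 0 ∧ B.mulVec v = lam • v ∧ lam ≤ t := by
      by_cases hcase : ∑ x, c x * B.mulVec c x ≤ t * ∑ x, c x ^ 2
      · exact exists_eigen_le B hBH t c hc0 hcase
      · push_neg at hcase
        have hd0 : d ≠ 0 := by
          intro h0
          rw [h0] at hcd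
          simp only [Pi.zero_apply, zero_mul, Finset.sum_const_zero, add_zero] at hcd
          have : (0:ℝ) ^ 2 = 0 := by norm_num
          simp [this] at hcd
          linarith
        refine exists_eigen_le B hBH t d hd0 ?_
        have hexp : t * ((∑ r, c r ^ 2) + (∑ r, d r ^ 2))
            = t * ∑ r, c r ^ 2 + t * ∑ r, d r ^ 2 := by ring
        linarith [hcd, hexp]
    obtain ⟨lam, v, hv0, heig, hlam⟩ := hex
    exact ⟨lam, v, hv0, heig, lt_of_le_of_lt hlam (by rw [ht]; linarith)⟩
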